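/- Let λ be an uncountable cardinal. Then λ = ℶ_λ if and only if for every infinite cardinal μ < λ one has ℶ_{(2^μ)⁺} < λ. -/

import Mathlib

universe u

open Cardinal Ordinal

private lemma self_le_beth (c : Cardinal.{u}) : c ≤ Cardinal.beth c.ord := by
  exact Cardinal.le_beth_ord c

/-- For an uncountable cardinal `λ`, `λ = ℶ_λ` iff for every infinite `μ < λ`,
the Hanf number `h(μ) = ℶ_{(2^μ)⁺}` is `< λ`. -/
theorem stmt_1 (lam : Cardinal.{u}) (h : Cardinal.aleph0 < lam) :
    lam = Cardinal.beth lam.ord ↔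
      ∀ μ : Cardinal.{u}, Cardinal.aleph0 ≤ μ → μ < lam →
        Cardinal.beth (Order.succ ((2 : Cardinal.{u}) ^ μ)).ord < lam := by
  have hlim : Order.IsSuccLimit lam.ord := Cardinal.isSuccLimit_ord h.le
  constructor
  · intro hfix μ hμ hμlam
    -- find α < lam.ord with μ ≤ beth α
    have hμ' : μ < Cardinal.beth lam.ord := hfix ▸ hμlam
    rw [Cardinal.beth_limit hlim] at hμ'
    obtain ⟨⟨α, hα⟩, hle⟩ := lt_ciSup_iff' (Cardinal.bddAbove_range _) |>.mp hμ'
    have h2 : Order.succ ((2:Cardinal.{u}) ^ μ) ≤ Cardinal.beth (Order.succ (Order.succ α)) := by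
      rw [Cardinal.beth_succ, Cardinal.beth_succ]
      calc Order.succ ((2:Cardinal.{u}) ^ μ) ≤ 2 ^ (2 ^ μ) :=
            Order.succ_le_of_lt (Cardinal.cantor _)
        _ ≤ 2 ^ ((2:Cardinal.{u}) ^ Cardinal.beth α) :=
            Cardinal.power_le_power_left two_ne_zero
              (Cardinal.power_le_power_left two_ne_zero hle.le)
    have hss : Order.succ (Order.succ α) < lam.ord :=
      hlim.succ_lt (hlim.succ_lt hα)
    have : (Order.succ ((2:Cardinal.{u}) ^ μ)).ord < lam.ord := by
      have h3 : Cardinal.beth (Order.succ (Order.succ α)) < Cardinal.beth lam.ord :=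
        Cardinal.beth_lt_beth.2 hss
      calc (Order.succ ((2:Cardinal.{u}) ^ μ)).ord
          ≤ (Cardinal.beth (Order.succ (Order.succ α))).ord := Cardinal.ord_le_ord.2 h2
        _ < (Cardinal.beth lam.ord).ord := Cardinal.ord_lt_ord.2 h3
        _ = lam.ord := by rw [← hfix]
    calc Cardinal.beth (Order.succ ((2:Cardinal.{u}) ^ μ)).ord
        < Cardinal.beth lam.ord := Cardinal.beth_lt_beth.2 this
      _ = lam := hfix.symm
  · intro H
    -- Key: ∀ α < lam.ord, beth α < lam
    have key : ∀ α : Ordinal.{u}, α < lam.ord → Cardinal.beth α < lam := by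
      intro α
      induction α using Ordinal.limitRecOn with
      | zero => intro _; rw [Cardinal.beth_zero]; exact h
      | add_one β ih =>
        intro hβ
        have hβ' : β < lam.ord := (Order.lt_succ β).trans hβ
        have hb : Cardinal.beth β < lam := ih hβ'
        have := H (Cardinal.beth β) (Cardinal.aleph0_le_beth β) hb
        rw [Ordinal.add_one_eq_succ, Cardinal.beth_succ]
        calc (2:Cardinal.{u}) ^ Cardinal.beth β
            < Order.succ ((2:Cardinal.{u}) ^ Cardinal.beth β) := Order.lt_succ _
          _ ≤ Cardinal.beth (Order.succ ((2:Cardinal.{u}) ^ Cardinal.beth β)).ord :=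
              self_le_beth _
          _ < lam := this
      | limit β hβlim ih =>
        intro hβ
        by_contra hcon
        push_neg at hcon
        -- lam ≤ beth β; derive lam ≤ β.card < lam
        have hcard : β.card < lam := Cardinal.lt_ord.1 hβ
        have hub : ∀ γ < β, Cardinal.beth γ ≤ β.card := by
          intro γ hγ
          have hγ' : γ < lam.ord := hγ.trans hβ
          have hγs : Order.succ γ < β := hβlim.succ_lt hγ
          have hbγ : Cardinal.beth γ < lam := ih γ hγ hγ'
          have hH := H (Cardinal.beth γ) (Cardinal.aleph0_le_beth γ) hbγ
          have : Cardinal.beth (Order.succ ((2:Cardinal.{u}) ^ Cardinal.beth γ)).ord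
              < Cardinal.beth β := lt_of_lt_of_le hH hcon
          have hord : (Order.succ ((2:Cardinal.{u}) ^ Cardinal.beth γ)).ord < β :=
            Cardinal.beth_lt_beth.1 this
          calc Cardinal.beth γ ≤ (2:Cardinal.{u}) ^ Cardinal.beth γ :=
                (Cardinal.cantor _).le
            _ ≤ Order.succ ((2:Cardinal.{u}) ^ Cardinal.beth γ) := (Order.lt_succ _).le
            _ = (Order.succ ((2:Cardinal.{u}) ^ Cardinal.beth γ)).ord.card :=
                (Cardinal.card_ord _).symm
            _ ≤ β.card := Ordinal.card_le_card hord.le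
        have : Cardinal.beth β ≤ β.card := by
          rw [Cardinal.beth_limit hβlim]
          exact ciSup_le' fun ⟨γ, hγ⟩ => hub γ hγ
        exact absurd (hcon.trans this) hcard.not_ge
    apply le_antisymm (self_le_beth lam)
    rw [Cardinal.beth_limit hlim]
    exact ciSup_le' fun ⟨α, hα⟩ => (key α hα).le
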